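/- arXiv:2403.08805 — 2 statements merged into one kernel-verified Lean document; each statement's English description precedes it below -/
import Mathlib

section
/- For every λ > 0, the Shannon entropy H_S of the Poisson distribution is differentiable at λ and its derivative equals H_S'(λ) = -log λ + e^{-λ} · ∑_{k=1}^∞ λ^k · log(k+1) / k!. -/
open Real

private lemma key_bound (n : ℕ) : (n : ℝ) ≤ 2 ^ n := by
  calc (n : ℝ) ≤ ((2 ^ n : ℕ) : ℝ) := by exact_mod_cast (Nat.lt_two_pow_self (n := n)).le
  _ = 2 ^ n := by push_cast; ring

private lemma log_factorial_le (n : ℕ) : Real.log (Nat.factorial n) ≤ (n : ℝ) * n := by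
  rcases Nat.eq_zero_or_pos n with h | h
  · simp [h]
  · have h1 : (Nat.factorial n : ℝ) ≤ (n : ℝ) ^ n := by
      exact_mod_cast Nat.factorial_le_pow n
    have h2 : Real.log (Nat.factorial n) ≤ Real.log ((n : ℝ) ^ n) :=
      Real.log_le_log (by positivity) h1
    calc Real.log (Nat.factorial n) ≤ (n : ℝ) * Real.log n := by
          rwa [Real.log_pow] at h2
    _ ≤ (n : ℝ) * n := by
          have := Real.log_le_self (show (0:ℝ) ≤ n by positivity)
          have hn : (0:ℝ) ≤ n := by positivity
          nlinarith

private lemma sumAux (c : ℕ → ℝ) (A B : ℝ) (h : ∀ k, |c k| ≤ A * B ^ k) (x : ℝ) :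
    Summable fun k : ℕ => c k * x ^ k / (Nat.factorial k : ℝ) := by
  apply Summable.of_abs
  apply Summable.of_nonneg_of_le (fun k => abs_nonneg _) (fun k => ?_)
    ((Real.summable_pow_div_factorial (B * |x|)).mul_left A)
  calc |c k * x ^ k / (Nat.factorial k : ℝ)|
      = |c k| * |x| ^ k / (Nat.factorial k : ℝ) := by
        rw [abs_div, abs_mul, abs_pow, Nat.abs_cast]
    _ ≤ (A * B ^ k) * |x| ^ k / (Nat.factorial k : ℝ) := by
        have hk : (0:ℝ) < Nat.factorial k := by positivity
        gcongr
        exact h k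
    _ = A * ((B * |x|) ^ k / (Nat.factorial k : ℝ)) := by rw [mul_pow]; ring

private lemma summable_one (x : ℝ) : Summable fun k : ℕ => x ^ k / (Nat.factorial k : ℝ) :=
  Real.summable_pow_div_factorial x

private lemma summable_k (x : ℝ) :
    Summable fun k : ℕ => (k : ℝ) * x ^ k / (Nat.factorial k : ℝ) := by
  refine sumAux (fun k => (k : ℝ)) 1 2 (fun k => ?_) x
  rw [Nat.abs_cast, one_mul]
  exact key_bound k

private lemma summable_logfac (x : ℝ) :
    Summable fun k : ℕ => Real.log (Nat.factorial k : ℝ) * x ^ k / (Nat.factorial k : ℝ) := by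
  refine sumAux _ 1 4 (fun k => ?_) x
  rw [one_mul, abs_of_nonneg (Real.log_nonneg (by exact_mod_cast Nat.one_le_iff_ne_zero.mpr (Nat.factorial_ne_zero k)))]
  calc Real.log (Nat.factorial k : ℝ) ≤ (k : ℝ) * k := log_factorial_le k
  _ ≤ 2 ^ k * 2 ^ k := by nlinarith [key_bound k, Nat.cast_nonneg (α := ℝ) k, pow_nonneg (by norm_num : (0:ℝ) ≤ 2) k]
  _ = 4 ^ k := by rw [← mul_pow]; norm_num

private lemma summable_logfac_succ (x : ℝ) :
    Summable fun k : ℕ => Real.log (Nat.factorial (k+1) : ℝ) * x ^ k / (Nat.factorial k : ℝ) := by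
  refine sumAux _ 4 4 (fun k => ?_) x
  have hone : (1:ℝ) ≤ 2 ^ k := by simpa using pow_le_pow_right₀ (by norm_num : (1:ℝ) ≤ 2) (Nat.zero_le k)
  rw [abs_of_nonneg (Real.log_nonneg (by exact_mod_cast Nat.one_le_iff_ne_zero.mpr (Nat.factorial_ne_zero (k+1))))]
  calc Real.log (Nat.factorial (k+1) : ℝ) ≤ ((k:ℝ) + 1) * ((k:ℝ)+1) := by
        have := log_factorial_le (k+1); push_cast at this ⊢; linarith
  _ ≤ (2 * 2 ^ k) * (2 * 2 ^ k) := by nlinarith [key_bound k, Nat.cast_nonneg (α := ℝ) k, pow_nonneg (by norm_num : (0:ℝ) ≤ 2) k]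
  _ = 4 * 4 ^ k := by rw [show (4:ℝ)^k = 2^k * 2^k by rw [← mul_pow]; norm_num]; ring

private lemma summable_logsucc (x : ℝ) :
    Summable fun k : ℕ => x ^ k * Real.log ((k : ℝ) + 1) / (Nat.factorial k : ℝ) := by
  have : Summable fun k : ℕ => Real.log ((k : ℝ) + 1) * x ^ k / (Nat.factorial k : ℝ) := by
    refine sumAux _ 2 2 (fun k => ?_) x
    have hone : (1:ℝ) ≤ 2 ^ k := by simpa using pow_le_pow_right₀ (by norm_num : (1:ℝ) ≤ 2) (Nat.zero_le k)
    rw [abs_of_nonneg (Real.log_nonneg (by linarith [Nat.cast_nonneg (α := ℝ) k]))]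
    calc Real.log ((k:ℝ) + 1) ≤ (k : ℝ) + 1 := by
          have := Real.log_le_self (show (0:ℝ) ≤ (k:ℝ)+1 by positivity); linarith
    _ ≤ 2 * 2 ^ k := by nlinarith [key_bound k]
  refine this.congr fun k => by ring

private lemma tsum_exp (x : ℝ) :
    ∑' k : ℕ, x ^ k / (Nat.factorial k : ℝ) = Real.exp x := by
  rw [Real.exp_eq_exp_ℝ, NormedSpace.exp_eq_tsum_div]

private lemma tsum_mean (x : ℝ) :
    ∑' k : ℕ, (k : ℝ) * x ^ k / (Nat.factorial k : ℝ) = x * Real.exp x := by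
  rw [(summable_k x).tsum_eq_zero_add]
  simp only [Nat.cast_zero, zero_mul, pow_zero, Nat.factorial_zero, Nat.cast_one, zero_div,
    zero_add]
  have step : ∀ k : ℕ, ((k+1 : ℕ) : ℝ) * x ^ (k+1) / (Nat.factorial (k+1) : ℝ)
      = x * (x ^ k / (Nat.factorial k : ℝ)) := by
    intro k
    rw [Nat.factorial_succ]
    push_cast
    have h1 : ((k:ℝ) + 1) ≠ 0 := by positivity
    have h2 : (Nat.factorial k : ℝ) ≠ 0 := by positivity
    field_simp
    ring
  rw [tsum_congr step, tsum_mul_left, tsum_exp]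

private lemma shift_term (l : ℝ) (k : ℕ) :
    Real.log (Nat.factorial (k+1) : ℝ) * (((k+1 : ℕ) : ℝ) * l ^ ((k+1) - 1)) /
        (Nat.factorial (k+1) : ℝ)
      = Real.log (Nat.factorial (k+1) : ℝ) * l ^ k / (Nat.factorial k : ℝ) := by
  rw [Nat.add_sub_cancel, Nat.factorial_succ]
  push_cast
  have h1 : ((k:ℝ) + 1) ≠ 0 := by positivity
  have h2 : (Nat.factorial k : ℝ) ≠ 0 := by positivity
  field_simp

private lemma hasDerivAt_S (l : ℝ) :
    HasDerivAt
      (fun x : ℝ => ∑' k : ℕ, Real.log (Nat.factorial k : ℝ) * x ^ k / (Nat.factorial k : ℝ))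
      (∑' k : ℕ, Real.log (Nat.factorial (k+1) : ℝ) * l ^ k / (Nat.factorial k : ℝ)) l := by
  set R : ℝ := |l| + 1 with hR
  have hR1 : (1:ℝ) ≤ R := le_add_of_nonneg_left (abs_nonneg l)
  have hR0 : (0:ℝ) < R := by linarith
  have hu : Summable fun k : ℕ =>
      (Real.log (Nat.factorial k : ℝ) * k) * R ^ k / (Nat.factorial k : ℝ) := by
    refine sumAux _ 1 8 (fun k => ?_) R
    have hlog : 0 ≤ Real.log (Nat.factorial k : ℝ) :=
      Real.log_nonneg (by exact_mod_cast Nat.one_le_iff_ne_zero.mpr (Nat.factorial_ne_zero k))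
    have h1 := log_factorial_le k
    have h2 := key_bound k
    have h3 : (0:ℝ) ≤ (k:ℝ) := Nat.cast_nonneg k
    have h4 : (0:ℝ) ≤ (2:ℝ)^k := by positivity
    have h5 : ((k:ℝ))^3 ≤ ((2:ℝ)^k)^3 := pow_le_pow_left₀ h3 h2 3
    have h8 : ((2:ℝ)^k)^3 = (8:ℝ)^k := by
      rw [← pow_mul, mul_comm, pow_mul]; norm_num
    rw [one_mul, abs_of_nonneg (mul_nonneg hlog h3)]
    nlinarith [mul_le_mul_of_nonneg_right h1 h3]
  have hmain : HasDerivAt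
      (fun x : ℝ => ∑' k : ℕ, Real.log (Nat.factorial k : ℝ) * x ^ k / (Nat.factorial k : ℝ))
      (∑' k : ℕ,
        Real.log (Nat.factorial k : ℝ) * ((k:ℝ) * l ^ (k - 1)) / (Nat.factorial k : ℝ)) l := by
    refine hasDerivAt_tsum_of_isPreconnected
      (y₀ := l) (g' := fun (k : ℕ) (y : ℝ) =>
        Real.log (Nat.factorial k : ℝ) * ((k:ℝ) * y ^ (k - 1)) / (Nat.factorial k : ℝ))
      hu (Metric.isOpen_ball (x := (0:ℝ)) (ε := R))
      ((convex_ball (0:ℝ) R).isPreconnected) (fun k y _ => ?_) (fun k y hy => ?_) ?_ ?_ ?_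
    · exact ((hasDerivAt_pow k y).const_mul (Real.log (Nat.factorial k : ℝ))).div_const _
    · have hy' : |y| ≤ R := (mem_ball_zero_iff.mp hy).le
      have hlog : 0 ≤ Real.log (Nat.factorial k : ℝ) :=
        Real.log_nonneg (by exact_mod_cast Nat.one_le_iff_ne_zero.mpr (Nat.factorial_ne_zero k))
      have hfac : (0:ℝ) < (Nat.factorial k : ℝ) := by positivity
      rw [Real.norm_eq_abs, abs_div, abs_mul, abs_mul, abs_pow, Nat.abs_cast, Nat.abs_cast,
        abs_of_nonneg hlog]
      calc Real.log (Nat.factorial k : ℝ) * ((k:ℝ) * |y| ^ (k-1)) / (Nat.factorial k : ℝ)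
          ≤ Real.log (Nat.factorial k : ℝ) * ((k:ℝ) * R ^ (k-1)) / (Nat.factorial k : ℝ) := by
            gcongr
        _ ≤ Real.log (Nat.factorial k : ℝ) * ((k:ℝ) * R ^ k) / (Nat.factorial k : ℝ) := by
            gcongr
            exact Nat.sub_le k 1
        _ = (Real.log (Nat.factorial k : ℝ) * k) * R ^ k / (Nat.factorial k : ℝ) := by ring
    · exact mem_ball_zero_iff.mpr (by rw [Real.norm_eq_abs]; linarith)
    · exact summable_logfac l
    · exact mem_ball_zero_iff.mpr (by rw [Real.norm_eq_abs]; linarith)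
  have hsum_shift : Summable fun k : ℕ =>
      Real.log (Nat.factorial k : ℝ) * ((k:ℝ) * l ^ (k - 1)) / (Nat.factorial k : ℝ) := by
    rw [← summable_nat_add_iff 1]
    exact (summable_logfac_succ l).congr fun k => (shift_term l k).symm
  have heq : (∑' k : ℕ,
        Real.log (Nat.factorial k : ℝ) * ((k:ℝ) * l ^ (k - 1)) / (Nat.factorial k : ℝ))
      = ∑' k : ℕ, Real.log (Nat.factorial (k+1) : ℝ) * l ^ k / (Nat.factorial k : ℝ) := by
    rw [hsum_shift.tsum_eq_zero_add]
    simp only [Nat.cast_zero, zero_mul, mul_zero, zero_div, zero_add, Nat.factorial_zero]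
    exact tsum_congr fun k => shift_term l k
  rw [← heq]
  exact hmain

private lemma entropy_eq (x : ℝ) (hx : 0 < x) :
    -∑' k : ℕ, (x ^ k * Real.exp (-x) / (Nat.factorial k : ℝ)) *
        Real.log (x ^ k * Real.exp (-x) / (Nat.factorial k : ℝ))
      = -(x * Real.log x) + x +
        Real.exp (-x) *
          ∑' k : ℕ, Real.log (Nat.factorial k : ℝ) * x ^ k / (Nat.factorial k : ℝ) := by
  have hterm : ∀ k : ℕ, (x ^ k * Real.exp (-x) / (Nat.factorial k : ℝ)) *
        Real.log (x ^ k * Real.exp (-x) / (Nat.factorial k : ℝ))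
      = Real.log x * (Real.exp (-x) * ((k:ℝ) * x ^ k / (Nat.factorial k : ℝ)))
        - x * (Real.exp (-x) * (x ^ k / (Nat.factorial k : ℝ)))
        - Real.exp (-x) *
            (Real.log (Nat.factorial k : ℝ) * x ^ k / (Nat.factorial k : ℝ)) := by
    intro k
    have hfac : (0:ℝ) < (Nat.factorial k : ℝ) := by positivity
    have hlog : Real.log (x ^ k * Real.exp (-x) / (Nat.factorial k : ℝ))
        = (k:ℝ) * Real.log x - x - Real.log (Nat.factorial k : ℝ) := by
      rw [Real.log_div (by positivity) hfac.ne', Real.log_mul (by positivity)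
        (Real.exp_ne_zero _), Real.log_pow, Real.log_exp]
      ring
    rw [hlog]; ring
  rw [tsum_congr hterm]
  have s1 : Summable fun k : ℕ =>
      Real.log x * (Real.exp (-x) * ((k:ℝ) * x ^ k / (Nat.factorial k : ℝ))) :=
    ((summable_k x).mul_left _).mul_left _
  have s2 : Summable fun k : ℕ => x * (Real.exp (-x) * (x ^ k / (Nat.factorial k : ℝ))) :=
    ((summable_one x).mul_left _).mul_left _
  have s3 : Summable fun k : ℕ => Real.exp (-x) *
      (Real.log (Nat.factorial k : ℝ) * x ^ k / (Nat.factorial k : ℝ)) :=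
    (summable_logfac x).mul_left _
  rw [(s1.sub s2).tsum_sub s3, s1.tsum_sub s2, tsum_mul_left, tsum_mul_left, tsum_mul_left,
    tsum_mul_left, tsum_mul_left, tsum_mean, tsum_exp]
  have hE : Real.exp (-x) * Real.exp x = 1 := by
    rw [← Real.exp_add]; simp
  linear_combination (-(x * Real.log x) + x) * hE

/-- For every `λ > 0` the Shannon entropy of the Poisson distribution is differentiable
at `λ` with derivative `H_S'(λ) = -log λ + e^{-λ} · ∑_{k=1}^∞ λ^k log(k+1)/k!`
(the `k = 0` term of the series vanishes since `log 1 = 0`, so the sum over all `k ∈ ℕ`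
equals the sum from `k = 1`). -/
theorem shannon_entropy_poisson_hasDerivAt (l : ℝ) (hl : 0 < l) :
    HasDerivAt (fun x : ℝ =>
      -∑' k : ℕ, (x ^ k * Real.exp (-x) / (Nat.factorial k : ℝ)) *
        Real.log (x ^ k * Real.exp (-x) / (Nat.factorial k : ℝ)))
      (-Real.log l +
        Real.exp (-l) * ∑' k : ℕ, l ^ k * Real.log ((k : ℝ) + 1) / (Nat.factorial k : ℝ))
      l := by
  have hS := hasDerivAt_S l
  have hexp : HasDerivAt (fun x : ℝ => Real.exp (-x)) (-Real.exp (-l)) l := by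
    simpa [Function.comp_def] using (Real.hasDerivAt_exp (-l)).comp l ((hasDerivAt_id l).neg)
  have hmul := hexp.mul hS
  have hxlog := (Real.hasDerivAt_mul_log hl.ne').neg
  have hG := (hxlog.add (hasDerivAt_id' l)).add hmul
  have hEq : (fun x : ℝ =>
        -∑' k : ℕ, (x ^ k * Real.exp (-x) / (Nat.factorial k : ℝ)) *
          Real.log (x ^ k * Real.exp (-x) / (Nat.factorial k : ℝ)))
      =ᶠ[nhds l] (fun x : ℝ => (-(x * Real.log x) + x) +
        Real.exp (-x) *
          ∑' k : ℕ, Real.log (Nat.factorial k : ℝ) * x ^ k / (Nat.factorial k : ℝ)) := by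
    filter_upwards [Ioi_mem_nhds hl] with x hx
    exact entropy_eq x hx
  have hT : (∑' k : ℕ, Real.log (Nat.factorial (k+1) : ℝ) * l ^ k / (Nat.factorial k : ℝ))
      = (∑' k : ℕ, Real.log (Nat.factorial k : ℝ) * l ^ k / (Nat.factorial k : ℝ))
        + ∑' k : ℕ, l ^ k * Real.log ((k : ℝ) + 1) / (Nat.factorial k : ℝ) := by
    rw [← (summable_logfac l).tsum_add (summable_logsucc l)]
    refine tsum_congr fun k => ?_
    have hsucc : Real.log (Nat.factorial (k+1) : ℝ)
        = Real.log ((k:ℝ) + 1) + Real.log (Nat.factorial k : ℝ) := by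
      rw [Nat.factorial_succ]
      push_cast
      rw [Real.log_mul (by positivity) (by positivity)]
    rw [hsucc]; ring
  have final := hG.congr_of_eventuallyEq hEq
  have hval : (-(Real.log l + 1) + 1) +
      ((-Real.exp (-l)) *
          (∑' k : ℕ, Real.log (Nat.factorial k : ℝ) * l ^ k / (Nat.factorial k : ℝ))
        + Real.exp (-l) *
          (∑' k : ℕ, Real.log (Nat.factorial (k+1) : ℝ) * l ^ k / (Nat.factorial k : ℝ)))
      = -Real.log l +
        Real.exp (-l) * ∑' k : ℕ, l ^ k * Real.log ((k : ℝ) + 1) / (Nat.factorial k : ℝ) := by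
    rw [hT]; ring
  rwa [hval] at final
end

section
/- As λ → ∞, the quantity e^{-λ} · (log λ)^{-1} · ∑_{k=1}^{⌊λ/2⌋} λ^k · log(k+1) / k! tends to 0, where ⌊λ/2⌋ denotes the greatest integer not exceeding λ/2 and log denotes the natural logarithm. -/
open Filter Finset

lemma pow_div_fact_le_exp {x : ℝ} (hx : 0 ≤ x) (k : ℕ) :
    x ^ k / (Nat.factorial k : ℝ) ≤ Real.exp x := by
  calc x ^ k / (Nat.factorial k : ℝ)
      ≤ ∑ i ∈ range (k + 1), x ^ i / (Nat.factorial i : ℝ) := by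
        refine Finset.single_le_sum (f := fun i => x ^ i / (Nat.factorial i : ℝ))
          (fun i _ => by positivity) (by simp)
    _ ≤ Real.exp x := Real.sum_le_exp_of_nonneg hx _

-- the key eventual bound
lemma key_bound_s19 {l : ℝ} (hl : 3 ≤ l) :
    Real.exp (-l) * (Real.log l)⁻¹ *
        ∑ k ∈ Finset.Icc 1 ⌊l / 2⌋₊, l ^ k * Real.log ((k : ℝ) + 1) / (Nat.factorial k : ℝ)
      ≤ 2 * l * Real.exp ((Real.log 2 - 1) / 2 * l) := by
  have hl0 : (0:ℝ) < l := by linarith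
  have hlog1 : 1 ≤ Real.log l := by
    rw [Real.le_log_iff_exp_le hl0]
    calc Real.exp 1 ≤ 2.7182818286 := Real.exp_one_lt_d9.le
      _ ≤ l := by linarith
  set m := ⌊l / 2⌋₊ with hm
  have hml : (m : ℝ) ≤ l / 2 := Nat.floor_le (by linarith)
  -- bound each term
  have hterm : ∀ k ∈ Finset.Icc 1 m,
      l ^ k * Real.log ((k : ℝ) + 1) / (Nat.factorial k : ℝ) ≤ l * (2 ^ k * Real.exp (l / 2)) := by
    intro k hk
    simp only [Finset.mem_Icc] at hk
    have hk2 : (k : ℝ) ≤ l / 2 := le_trans (by exact_mod_cast Nat.cast_le.mpr hk.2) hml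
    have hlogk : Real.log ((k : ℝ) + 1) ≤ l := by
      calc Real.log ((k : ℝ) + 1) ≤ (k : ℝ) + 1 := Real.log_le_self (by positivity)
        _ ≤ l / 2 + 1 := by linarith
        _ ≤ l := by linarith
    have hpow : l ^ k / (Nat.factorial k : ℝ) ≤ 2 ^ k * Real.exp (l / 2) := by
      have h1 : (l / 2) ^ k / (Nat.factorial k : ℝ) ≤ Real.exp (l / 2) :=
        pow_div_fact_le_exp (by linarith) k
      have h2 : l ^ k = 2 ^ k * (l / 2) ^ k := by
        rw [← mul_pow]; ring_nf
      rw [h2, mul_div_assoc]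
      exact mul_le_mul_of_nonneg_left h1 (by positivity)
    calc l ^ k * Real.log ((k : ℝ) + 1) / (Nat.factorial k : ℝ)
        = Real.log ((k : ℝ) + 1) * (l ^ k / (Nat.factorial k : ℝ)) := by ring
      _ ≤ l * (2 ^ k * Real.exp (l / 2)) := by
          apply mul_le_mul hlogk hpow (by positivity) (by linarith)
  have hsum : ∑ k ∈ Finset.Icc 1 m, l ^ k * Real.log ((k : ℝ) + 1) / (Nat.factorial k : ℝ)
      ≤ l * Real.exp (l / 2) * 2 ^ (m + 1) := by
    calc ∑ k ∈ Finset.Icc 1 m, l ^ k * Real.log ((k : ℝ) + 1) / (Nat.factorial k : ℝ)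
        ≤ ∑ k ∈ Finset.Icc 1 m, l * (2 ^ k * Real.exp (l / 2)) := Finset.sum_le_sum hterm
      _ = l * Real.exp (l / 2) * ∑ k ∈ Finset.Icc 1 m, (2:ℝ) ^ k := by
          rw [Finset.mul_sum]; apply Finset.sum_congr rfl; intro k _; ring
      _ ≤ l * Real.exp (l / 2) * 2 ^ (m + 1) := by
          apply mul_le_mul_of_nonneg_left _ (by positivity)
          calc ∑ k ∈ Finset.Icc 1 m, (2:ℝ) ^ k
              ≤ ∑ k ∈ Finset.range (m + 1), (2:ℝ) ^ k := by
                apply Finset.sum_le_sum_of_subset_of_nonneg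
                · intro k hk; simp only [Finset.mem_Icc] at hk; simp; omega
                · intro k _ _; positivity
            _ = 2 ^ (m + 1) - 1 := by
                have := geom_sum_eq (by norm_num : (2:ℝ) ≠ 1) (m + 1)
                rw [this]; ring
            _ ≤ 2 ^ (m + 1) := by linarith
  have h2pow : (2:ℝ) ^ (m + 1) ≤ 2 * Real.exp (l / 2 * Real.log 2) := by
    have : (2:ℝ) ^ (m:ℝ) ≤ (2:ℝ) ^ (l/2 : ℝ) :=
      Real.rpow_le_rpow_of_exponent_le (by norm_num) hml
    rw [Real.rpow_natCast] at this
    have h3 : (2:ℝ) ^ (l/2 : ℝ) = Real.exp (l / 2 * Real.log 2) := by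
      rw [Real.rpow_def_of_pos (by norm_num), mul_comm]
    calc (2:ℝ) ^ (m + 1) = 2 * 2 ^ m := by ring
      _ ≤ 2 * Real.exp (l / 2 * Real.log 2) := by rw [← h3]; linarith
  have hinv : (Real.log l)⁻¹ ≤ 1 := by
    rw [inv_le_one_iff₀]; right; exact hlog1
  have hsumnn : 0 ≤ ∑ k ∈ Finset.Icc 1 m, l ^ k * Real.log ((k : ℝ) + 1) / (Nat.factorial k : ℝ) := by
    apply Finset.sum_nonneg
    intro k hk
    simp only [Finset.mem_Icc] at hk
    have : (1:ℝ) ≤ (k:ℝ) + 1 := by have := Nat.cast_nonneg (α := ℝ) k; linarith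
    have := Real.log_nonneg this
    positivity
  calc Real.exp (-l) * (Real.log l)⁻¹ *
        ∑ k ∈ Finset.Icc 1 m, l ^ k * Real.log ((k : ℝ) + 1) / (Nat.factorial k : ℝ)
      ≤ Real.exp (-l) * 1 *
        ∑ k ∈ Finset.Icc 1 m, l ^ k * Real.log ((k : ℝ) + 1) / (Nat.factorial k : ℝ) := by
        apply mul_le_mul_of_nonneg_right _ hsumnn
        apply mul_le_mul_of_nonneg_left hinv (Real.exp_pos _).le
    _ ≤ Real.exp (-l) * 1 * (l * Real.exp (l / 2) * (2 * Real.exp (l / 2 * Real.log 2))) := by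
        apply mul_le_mul_of_nonneg_left _ (by positivity)
        exact hsum.trans (mul_le_mul_of_nonneg_left h2pow (by positivity))
    _ = 2 * l * (Real.exp (-l) * Real.exp (l / 2) * Real.exp (l / 2 * Real.log 2)) := by ring
    _ = 2 * l * Real.exp ((Real.log 2 - 1) / 2 * l) := by
        rw [← Real.exp_add, ← Real.exp_add]; ring_nf

lemma aux_tendsto : Tendsto (fun l : ℝ => 2 * l * Real.exp ((Real.log 2 - 1) / 2 * l))
    atTop (nhds 0) := by
  have hc : (0:ℝ) < (1 - Real.log 2) / 2 := by
    have := Real.log_two_lt_d9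
    norm_num; linarith
  have h1 : Tendsto (fun x : ℝ => x ^ 1 * Real.exp (-x)) atTop (nhds 0) :=
    Real.tendsto_pow_mul_exp_neg_atTop_nhds_zero 1
  have h2 : Tendsto (fun l : ℝ => (1 - Real.log 2) / 2 * l) atTop atTop :=
    Tendsto.const_mul_atTop hc tendsto_id
  have h3 := h1.comp h2
  have h4 : Tendsto (fun l : ℝ => (2 / ((1 - Real.log 2) / 2)) *
      (((1 - Real.log 2) / 2 * l) ^ 1 * Real.exp (-((1 - Real.log 2) / 2 * l))))
      atTop (nhds 0) := by
    simpa using h3.const_mul (2 / ((1 - Real.log 2) / 2))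
  have hc' : ((1 - Real.log 2) / 2 : ℝ) ≠ 0 := ne_of_gt hc
  convert h4 using 2 with l
  rw [pow_one, show -((1 - Real.log 2) / 2 * l) = (Real.log 2 - 1) / 2 * l by ring,
    eq_comm, div_mul_eq_mul_div, div_eq_iff hc']
  ring

/-- As `λ → ∞`, `e^{-λ} (log λ)^{-1} ∑_{k=1}^{⌊λ/2⌋} λ^k log(k+1)/k! → 0`. -/
theorem poisson_lower_half_log_sum_tendsto_zero :
    Tendsto (fun l : ℝ =>
        Real.exp (-l) * (Real.log l)⁻¹ *
          ∑ k ∈ Finset.Icc 1 ⌊l / 2⌋₊, l ^ k * Real.log ((k : ℝ) + 1) / (Nat.factorial k : ℝ))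
      atTop (nhds 0) := by
  apply squeeze_zero' (g := fun l : ℝ => 2 * l * Real.exp ((Real.log 2 - 1) / 2 * l))
  · filter_upwards [eventually_ge_atTop (3:ℝ)] with l hl
    have hlog : 0 < Real.log l := by
      apply Real.log_pos; linarith
    have hsumnn : 0 ≤ ∑ k ∈ Finset.Icc 1 ⌊l / 2⌋₊,
        l ^ k * Real.log ((k : ℝ) + 1) / (Nat.factorial k : ℝ) := by
      apply Finset.sum_nonneg
      intro k hk
      have h1 : (1:ℝ) ≤ (k:ℝ) + 1 := by have := Nat.cast_nonneg (α := ℝ) k; linarith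
      have := Real.log_nonneg h1
      have hl0 : (0:ℝ) ≤ l := by linarith
      positivity
    positivity
  · filter_upwards [eventually_ge_atTop (3:ℝ)] with l hl
    exact key_bound_s19 hl
  · exact aux_tendsto
end
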